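/- The sets Γ_k = ⋃_{l∈ℤ} B(2^l·[k,k+1)), k ≥ 0, are pairwise disjoint and their union equals (ℝ⁺ × ℝ⁺) ∖ Δ, where Δ is the diagonal of ℝ⁺ × ℝ⁺. Moreover, for every dyadic interval I = I^j_k there exists one and only one J ∈ D^0 such that B(I) = B(2^l J) for some l ∈ ℤ, namely J = I^0_k = [k, k+1). -/

import Mathlib

open MeasureTheory Set
open scoped ENNReal

noncomputable section

/-- The dyadic interval `I^j_k = [k 2^{-j}, (k+1) 2^{-j})` of `ℝ⁺`. -/
def dyI (j : ℤ) (k : ℕ) : Set ℝ := Set.Ico ((k : ℝ) * 2 ^ (-j)) (((k : ℝ) + 1) * 2 ^ (-j))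

/-- The family `D` of dyadic intervals of `ℝ⁺`. -/
def IsDyadic (I : Set ℝ) : Prop := ∃ (j : ℤ) (k : ℕ), I = dyI j k

/-- `I(x,y)`: the smallest dyadic interval containing both `x` and `y`. -/
def dyInt (x y : ℝ) : Set ℝ := ⋂₀ {I : Set ℝ | IsDyadic I ∧ x ∈ I ∧ y ∈ I}

/-- The dyadic distance `δ(x,y) = |I(x,y)|`, with `δ(x,x) = 0`. -/
def dyDist (x y : ℝ) : ℝ := if x = y then 0 else (volume (dyInt x y)).toReal

/-- The `l`-th dyadic ancestor of a dyadic interval: the unique dyadic interval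
containing it whose measure is `2^l` times larger. -/
def dyAncestor (l : ℕ) (I : Set ℝ) : Set ℝ :=
  ⋂₀ {J : Set ℝ | IsDyadic J ∧ I ⊆ J ∧ volume J = 2 ^ l * volume I}

/-- The butterfly of the interval `[a, b)`:
`B = (I⁺ × I⁻) ∪ (I⁻ × I⁺)` where `I⁻, I⁺` are the two halves. -/
def bflyI (a b : ℝ) : Set (ℝ × ℝ) :=
  (Set.Ico ((a + b) / 2) b ×ˢ Set.Ico a ((a + b) / 2)) ∪
    (Set.Ico a ((a + b) / 2) ×ˢ Set.Ico ((a + b) / 2) b)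

/-- The butterfly `B(I^j_k)`. -/
def bfly (j : ℤ) (k : ℕ) : Set (ℝ × ℝ) := bflyI ((k : ℝ) * 2 ^ (-j)) (((k : ℝ) + 1) * 2 ^ (-j))

/-- The butterfly of an interval given as a set. -/
def bflySet (I : Set ℝ) : Set (ℝ × ℝ) := bflyI (sInf I) (sSup I)

/-- `Γ_k = ⋃_{l ∈ ℤ} B(2^l · [k, k+1))`. -/
def Gam (k : ℕ) : Set (ℝ × ℝ) := ⋃ l : ℤ, bflyI ((k : ℝ) * 2 ^ l) (((k : ℝ) + 1) * 2 ^ l)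

/-- The basic Haar wavelet `h^0_0 = 1_{[0,1/2)} - 1_{[1/2,1)}`. -/
def haar0 (x : ℝ) : ℝ :=
  Set.indicator (Set.Ico (0 : ℝ) (1 / 2)) (fun _ => 1) x
    - Set.indicator (Set.Ico (1 / 2 : ℝ) 1) (fun _ => 1) x

/-- The Haar wavelet `h^j_k(x) = 2^{j/2} h^0_0(2^j x - k)`, supported in `I^j_k`. -/
def haar (j : ℤ) (k : ℕ) (x : ℝ) : ℝ := (2 : ℝ) ^ ((j : ℝ) / 2) * haar0 (2 ^ j * x - (k : ℝ))

/-- The finite linear span of the Haar system. -/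
def HaarSpan (f : ℝ → ℝ) : Prop :=
  ∃ (F : Finset (ℤ × ℕ)) (c : ℤ × ℕ → ℝ), f = fun x => ∑ p ∈ F, c p * haar p.1 p.2 x

/-- `Ω_m(x,y) = δ(x,y) Σ_{I ∈ D} m(I) h_I(x) h_I(y)`. -/
def Omega (m : Set ℝ → ℝ) (x y : ℝ) : ℝ :=
  dyDist x y * ∑' p : ℤ × ℕ, m (dyI p.1 p.2) * (haar p.1 p.2 x * haar p.1 p.2 y)

/-- The dyadic fractional Laplacian `(-Δ)^{s/2}_{dy} f = Σ_{h ∈ H} |I(h)|^{-s} ⟨f, h⟩ h`. -/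
def dyLap (s : ℝ) (f : ℝ → ℝ) (x : ℝ) : ℝ :=
  ∑' p : ℤ × ℕ,
    (volume (dyI p.1 p.2)).toReal ^ (-s) * (∫ y, f y * haar p.1 p.2 y) * haar p.1 p.2 x

/-- The partial dyadic derivative `D^s_{(i)} f = Σ_{j ∈ ℤ} 2^{sj} ⟨f, h^j_i⟩ h^j_i`. -/
def Dsi (s : ℝ) (i : ℕ) (f : ℝ → ℝ) (x : ℝ) : ℝ :=
  ∑' j : ℤ, (2 : ℝ) ^ (s * (j : ℝ)) * (∫ y, f y * haar j i y) * haar j i x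

/-- The Haar multiplier `T_{(i)} g = Σ_{j ∈ ℤ} ⟨g, h^j_i⟩ h^j_i`. -/
def Ti (i : ℕ) (g : ℝ → ℝ) (x : ℝ) : ℝ := ∑' j : ℤ, (∫ y, g y * haar j i y) * haar j i x

/-- The directional derivative `D^s_m f = Σ_{h ∈ H} m(h) |I(h)|^{-s} ⟨f, h⟩ h`. -/
def Dsm (s : ℝ) (m : ℤ × ℕ → ℝ) (f : ℝ → ℝ) (x : ℝ) : ℝ :=
  ∑' p : ℤ × ℕ,
    m p * ((volume (dyI p.1 p.2)).toReal ^ (-s) * (∫ y, f y * haar p.1 p.2 y)) * haar p.1 p.2 x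

/-- The Haar multiplier `T_m g = Σ_{h ∈ H} m(h) ⟨g, h⟩ h`. -/
def Tm (m : ℤ × ℕ → ℝ) (g : ℝ → ℝ) (x : ℝ) : ℝ :=
  ∑' p : ℤ × ℕ, m p * (∫ y, g y * haar p.1 p.2 y) * haar p.1 p.2 x

/-- The component kernels `K_{(i)}(x,y) = Σ_{j ∈ ℤ} h^j_i(x) h^j_i(y)`. -/
def Kker (i : ℕ) (x y : ℝ) : ℝ := ∑' j : ℤ, haar j i x * haar j i y

open Classical in
/-- The multiplier `m_i` with `m_i(I^j_k) = 1` if `k = i` and `0` otherwise. -/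
def mInd (i : ℕ) (I : Set ℝ) : ℝ := if ∃ j : ℤ, I = dyI j i then 1 else 0

/-- The dyadic energy form `E^δ_s(f)`. -/
def dyEnergy (s : ℝ) (f : ℝ → ℝ) : ℝ :=
  ∫ x in Set.Ici (0 : ℝ), ∫ y in Set.Ici (0 : ℝ), (f x - f y) ^ 2 * dyDist x y ^ (-(1 + 2 * s))


section AuxButterfly

lemma mem_Ico_zpow_iff {x : ℝ} {n m : ℤ} :
    x ∈ Set.Ico ((n:ℝ) * 2^m) (((n:ℝ)+1) * 2^m) ↔ ⌊x / 2^m⌋ = n := by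
  have h2 : (0:ℝ) < 2^m := by positivity
  rw [Set.mem_Ico, Int.floor_eq_iff, le_div_iff₀ h2, div_lt_iff₀ h2]

lemma floor_half_step (x : ℝ) (m : ℤ) : ⌊x / 2^m⌋ = ⌊x / 2^(m-1)⌋ / 2 := by
  have h2 : (0:ℝ) < 2^(m-1) := by positivity
  set a := ⌊x / 2^(m-1)⌋ with ha
  have h1 : (a:ℝ) ≤ x / 2^(m-1) := Int.floor_le _
  have h1' : x / 2^(m-1) < a + 1 := Int.lt_floor_add_one _
  have hpow : (2:ℝ)^m = 2^(m-1) * 2 := by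
    rw [← zpow_add_one₀ (by norm_num : (2:ℝ) ≠ 0)]; ring_nf
  have hx : x / 2^m = (x / 2^(m-1)) / 2 := by rw [hpow]; ring
  have e1 : 2 * (a / 2) ≤ a := by omega
  have e2 : a < 2 * (a / 2) + 2 := by omega
  rw [hx, Int.floor_eq_iff]
  constructor
  · have h3 : ((2 * (a/2) : ℤ) : ℝ) ≤ (a : ℝ) := by exact_mod_cast e1
    push_cast at h3 ⊢
    linarith
  · have e2' : a + 1 ≤ 2 * (a / 2) + 2 := by omega
    have h3 : ((a + 1 : ℤ) : ℝ) ≤ ((2 * (a/2) + 2 : ℤ) : ℝ) := by exact_mod_cast e2'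
    push_cast at h3 ⊢
    linarith

lemma floor_agree_mono (x y : ℝ) {m m' : ℤ} (h : m ≤ m')
    (hm : ⌊x/2^m⌋ = ⌊y/2^m⌋) : ⌊x/2^m'⌋ = ⌊y/2^m'⌋ := by
  refine Int.le_induction (motive := fun n _ => ⌊x/2^n⌋ = ⌊y/2^n⌋) hm (fun n _ ih => ?_) m' h
  have hx := floor_half_step x (n+1)
  have hy := floor_half_step y (n+1)
  simp only [add_sub_cancel_right] at hx hy
  show ⌊x/2^(n+1)⌋ = ⌊y/2^(n+1)⌋
  rw [hx, hy]
  exact congrArg (· / 2) ih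

lemma mem_bflyI_char {k : ℕ} {l : ℤ} {x y : ℝ} :
    (x,y) ∈ bflyI ((k:ℝ)*2^l) (((k:ℝ)+1)*2^l) ↔
      ((⌊x/2^(l-1)⌋ = 2*(k:ℤ)+1 ∧ ⌊y/2^(l-1)⌋ = 2*(k:ℤ)) ∨
        (⌊x/2^(l-1)⌋ = 2*(k:ℤ) ∧ ⌊y/2^(l-1)⌋ = 2*(k:ℤ)+1)) := by
  have hpow : (2:ℝ)^l = 2^(l-1) * 2 := by
    rw [← zpow_add_one₀ (by norm_num : (2:ℝ) ≠ 0)]; ring_nf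
  have ea : (k:ℝ)*2^l = ((2*(k:ℤ) : ℤ):ℝ) * 2^(l-1) := by push_cast; rw [hpow]; ring
  have ec : ((k:ℝ)*2^l + ((k:ℝ)+1)*2^l)/2 = (((2*(k:ℤ) : ℤ):ℝ)+1) * 2^(l-1) := by
    push_cast; rw [hpow]; ring
  have eb : ((k:ℝ)+1)*2^l = (((2*(k:ℤ)+1 : ℤ):ℝ)+1) * 2^(l-1) := by
    push_cast; rw [hpow]; ring
  have ec' : (((2*(k:ℤ) : ℤ):ℝ)+1) * 2^(l-1) = ((2*(k:ℤ)+1 : ℤ):ℝ) * 2^(l-1) := by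
    push_cast; ring
  have hL : ∀ z : ℝ, z ∈ Set.Ico (((2*(k:ℤ) : ℤ):ℝ) * 2^(l-1))
      ((((2*(k:ℤ) : ℤ):ℝ)+1) * 2^(l-1)) ↔ ⌊z/2^(l-1)⌋ = 2*(k:ℤ) :=
    fun z => mem_Ico_zpow_iff
  have hR : ∀ z : ℝ, z ∈ Set.Ico ((((2*(k:ℤ) : ℤ):ℝ)+1) * 2^(l-1))
      ((((2*(k:ℤ)+1 : ℤ):ℝ)+1) * 2^(l-1)) ↔ ⌊z/2^(l-1)⌋ = 2*(k:ℤ)+1 := by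
    intro z
    rw [ec']
    exact mem_Ico_zpow_iff
  simp only [bflyI, Set.mem_union, Set.mem_prod]
  rw [ec, ea, eb]
  simp only [hL, hR]

lemma of_mem_bflyI {k : ℕ} {l : ℤ} {x y : ℝ}
    (h : (x,y) ∈ bflyI ((k:ℝ)*2^l) (((k:ℝ)+1)*2^l)) :
    ⌊x/2^l⌋ = (k:ℤ) ∧ ⌊y/2^l⌋ = (k:ℤ) ∧ ⌊x/2^(l-1)⌋ ≠ ⌊y/2^(l-1)⌋ ∧ 0 ≤ x ∧ 0 ≤ y := by
  rw [mem_bflyI_char] at h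
  have hx := floor_half_step x l
  have hy := floor_half_step y l
  have hxnn : (0:ℤ) ≤ ⌊x/2^(l-1)⌋ := by rcases h with ⟨h1,_⟩|⟨h1,_⟩ <;> omega
  have hynn : (0:ℤ) ≤ ⌊y/2^(l-1)⌋ := by rcases h with ⟨_,h2⟩|⟨_,h2⟩ <;> omega
  have h2 : (0:ℝ) < 2^(l-1) := by positivity
  have hx0 : 0 ≤ x := by
    have hfl := Int.floor_le (x/2^(l-1))
    have hd : (0:ℝ) ≤ x / 2^(l-1) := le_trans (by exact_mod_cast hxnn) hfl
    have := (le_div_iff₀ h2).mp hd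
    linarith
  have hy0 : 0 ≤ y := by
    have hfl := Int.floor_le (y/2^(l-1))
    have hd : (0:ℝ) ≤ y / 2^(l-1) := le_trans (by exact_mod_cast hynn) hfl
    have := (le_div_iff₀ h2).mp hd
    linarith
  rcases h with ⟨h1,h2'⟩|⟨h1,h2'⟩ <;>
    exact ⟨by rw [hx, h1]; omega, by rw [hy, h2']; omega, by omega, hx0, hy0⟩

lemma bflyI_unique {x y : ℝ} {k k' : ℕ} {l l' : ℤ}
    (h : (x,y) ∈ bflyI ((k:ℝ)*2^l) (((k:ℝ)+1)*2^l))
    (h' : (x,y) ∈ bflyI ((k':ℝ)*2^l') (((k':ℝ)+1)*2^l')) : k' = k := by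
  obtain ⟨hx, hy, hne, -, -⟩ := of_mem_bflyI h
  obtain ⟨hx', hy', hne', -, -⟩ := of_mem_bflyI h'
  have hll : l = l' := by
    by_contra hll
    rcases lt_or_gt_of_ne hll with hlt | hlt
    · exact hne' (floor_agree_mono x y (by omega) (hx.trans hy.symm))
    · exact hne (floor_agree_mono x y (by omega) (hx'.trans hy'.symm))
  subst hll
  have : (k:ℤ) = (k':ℤ) := by rw [← hx, hx']
  exact_mod_cast this.symm

lemma floor_ne_of_lt {x y : ℝ} (hxy : x < y) :
    ∃ S : ℤ, ⌊x/2^S⌋ ≠ ⌊y/2^S⌋ := by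
  obtain ⟨n, hn⟩ := pow_unbounded_of_one_lt (y - x)⁻¹ (by norm_num : (1:ℝ) < 2)
  refine ⟨-(n:ℤ), ?_⟩
  have hpos : (0:ℝ) < 2^(-(n:ℤ)) := by positivity
  have hc : (0:ℝ) < y - x := sub_pos.mpr hxy
  have h2n : (0:ℝ) < 2^n := by positivity
  have hlt : (2:ℝ)^(-(n:ℤ)) < y - x := by
    have hrw : (2:ℝ)^(-(n:ℤ)) = (2^n)⁻¹ := by rw [zpow_neg, zpow_natCast]
    rw [hrw]
    have e1 : (y - x) * (y - x)⁻¹ = 1 := mul_inv_cancel₀ (ne_of_gt hc)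
    have e2 : (2:ℝ)^n * (2^n)⁻¹ = 1 := mul_inv_cancel₀ (ne_of_gt h2n)
    nlinarith [mul_pos hc h2n, inv_pos.mpr h2n, inv_pos.mpr hc]
  have h1 : x/2^(-(n:ℤ)) + 1 < y/2^(-(n:ℤ)) := by
    have hgt : 1 < (y - x)/2^(-(n:ℤ)) := (one_lt_div hpos).mpr hlt
    have hsub : (y - x)/2^(-(n:ℤ)) = y/2^(-(n:ℤ)) - x/2^(-(n:ℤ)) := sub_div y x _
    linarith
  intro heq
  have hx2 := Int.floor_le (x/2^(-(n:ℤ)))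
  have hy2 := Int.lt_floor_add_one (y/2^(-(n:ℤ)))
  have hcast : ((⌊x/2^(-(n:ℤ))⌋ : ℤ) : ℝ) = ((⌊y/2^(-(n:ℤ))⌋ : ℤ) : ℝ) := by
    exact_mod_cast heq
  linarith

lemma exists_bfly {x y : ℝ} (hx0 : 0 ≤ x) (hy0 : 0 ≤ y) (hxy : x ≠ y) :
    ∃ (k : ℕ) (l : ℤ), (x,y) ∈ bflyI ((k:ℝ)*2^l) (((k:ℝ)+1)*2^l) := by
  -- floors agree at large scales
  obtain ⟨n, hn⟩ := pow_unbounded_of_one_lt (max x y) (by norm_num : (1:ℝ) < 2)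
  have hL : ⌊x/2^(n:ℤ)⌋ = ⌊y/2^(n:ℤ)⌋ := by
    have hp : (0:ℝ) < 2^(n:ℤ) := by positivity
    have hxlt : x < 2^(n:ℤ) := by
      rw [zpow_natCast]; exact lt_of_le_of_lt (le_max_left x y) hn
    have hylt : y < 2^(n:ℤ)  := by
      rw [zpow_natCast]; exact lt_of_le_of_lt (le_max_right x y) hn
    have ex : ⌊x/2^(n:ℤ)⌋ = 0 := by
      rw [Int.floor_eq_zero_iff, Set.mem_Ico]
      constructor
      · positivity
      · rw [div_lt_one hp]; exact hxlt
    have ey : ⌊y/2^(n:ℤ)⌋ = 0 := by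
      rw [Int.floor_eq_zero_iff, Set.mem_Ico]
      constructor
      · positivity
      · rw [div_lt_one hp]; exact hylt
    rw [ex, ey]
  -- floors differ at some small scale
  obtain ⟨S, hS⟩ : ∃ S : ℤ, ⌊x/2^S⌋ ≠ ⌊y/2^S⌋ := by
    rcases hxy.lt_or_gt with h | h
    · exact floor_ne_of_lt h
    · obtain ⟨S, hS⟩ := floor_ne_of_lt h
      exact ⟨S, fun he => hS he.symm⟩
  -- minimal agreeing scale
  have hSL : S ≤ (n:ℤ) := by
    by_contra hc
    push_neg at hc
    exact hS (floor_agree_mono x y hc.le hL)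
  have key : ∀ m : ℕ, ⌊x/2^(S + m)⌋ = ⌊y/2^(S + m)⌋ →
      ∃ l : ℤ, ⌊x/2^l⌋ = ⌊y/2^l⌋ ∧ ⌊x/2^(l-1)⌋ ≠ ⌊y/2^(l-1)⌋ := by
    intro m
    induction m with
    | zero => intro hm; simp only [Nat.cast_zero, add_zero] at hm; exact absurd hm hS
    | succ p ih =>
      intro hm
      by_cases hp : ⌊x/2^(S + p)⌋ = ⌊y/2^(S + p)⌋
      · exact ih hp
      · refine ⟨S + (p+1), by push_cast at hm ⊢; convert hm using 3 <;> ring, ?_⟩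
        have : S + ((p:ℤ)+1) - 1 = S + p := by ring
        rw [this]
        push_cast at hp
        exact hp
  obtain ⟨l, hl, hl'⟩ := key (n - S).toNat
    (by rw [show S + ((n - S).toNat : ℤ) = (n:ℤ) by omega]; exact hL)
  -- extract k
  have hxs := floor_half_step x l
  have hys := floor_half_step y l
  have hann : (0:ℤ) ≤ ⌊x/2^(l-1)⌋ := Int.floor_nonneg.mpr (by positivity)
  have hbnn : (0:ℤ) ≤ ⌊y/2^(l-1)⌋ := Int.floor_nonneg.mpr (by positivity)
  have hnn : (0:ℤ) ≤ ⌊x/2^l⌋ := Int.floor_nonneg.mpr (by positivity)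
  refine ⟨⌊x/2^l⌋.toNat, l, mem_bflyI_char.mpr ?_⟩
  rw [Int.toNat_of_nonneg hnn]
  rw [hxs, hys] at hl
  rw [hxs]
  omega

end AuxButterfly

/-- the sets `Γ_k` are pairwise disjoint, their union is
`(ℝ⁺ × ℝ⁺) ∖ Δ`, and every butterfly `B(I^j_k)` is of the form `B(2^l J)` for one
and only one `J ∈ D^0`, namely `J = [k, k+1)`. -/
theorem Gam_pairwise_disjoint_union_and_unique_class :
    (∀ k k' : ℕ, k ≠ k' → Disjoint (Gam k) (Gam k')) ∧
    ((⋃ k : ℕ, Gam k) =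
      (Set.Ici (0 : ℝ) ×ˢ Set.Ici (0 : ℝ)) \ {p : ℝ × ℝ | p.1 = p.2}) ∧
    (∀ (j : ℤ) (k : ℕ),
      (∃ l : ℤ, bfly j k = bflyI ((k : ℝ) * 2 ^ l) (((k : ℝ) + 1) * 2 ^ l)) ∧
      (∀ k' : ℕ,
        (∃ l : ℤ, bfly j k = bflyI ((k' : ℝ) * 2 ^ l) (((k' : ℝ) + 1) * 2 ^ l)) →
        k' = k)) := by
  refine ⟨?_, ?_, ?_⟩
  · intro k k' hkk
    rw [Set.disjoint_left]
    rintro ⟨x, y⟩ hp hp'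
    simp only [Gam, Set.mem_iUnion] at hp hp'
    obtain ⟨l, hl⟩ := hp
    obtain ⟨l', hl'⟩ := hp'
    exact hkk (bflyI_unique hl hl').symm
  · ext ⟨x, y⟩
    simp only [Gam, Set.mem_iUnion, Set.mem_diff, Set.mem_prod, Set.mem_Ici,
      Set.mem_setOf_eq]
    constructor
    · rintro ⟨k, l, h⟩
      obtain ⟨hx, hy, hne, hx0, hy0⟩ := of_mem_bflyI h
      exact ⟨⟨hx0, hy0⟩, fun he => hne (by rw [show x = y from he])⟩
    · rintro ⟨⟨hx0, hy0⟩, hne⟩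
      obtain ⟨k, l, h⟩ := exists_bfly hx0 hy0 hne
      exact ⟨k, l, h⟩
  · intro j k
    refine ⟨⟨-j, rfl⟩, ?_⟩
    rintro k' ⟨l, hEq⟩
    have hpos : (0:ℝ) < 2^(-j-1) := by positivity
    set x₀ : ℝ := ((2*(k:ℤ)+1 : ℤ):ℝ) * 2^(-j-1) with hx₀
    set y₀ : ℝ := ((2*(k:ℤ) : ℤ):ℝ) * 2^(-j-1) with hy₀
    have hdx : x₀ / 2^(-j-1) = ((2*(k:ℤ)+1 : ℤ):ℝ) :=
      mul_div_cancel_right₀ _ (ne_of_gt hpos)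
    have hdy : y₀ / 2^(-j-1) = ((2*(k:ℤ) : ℤ):ℝ) :=
      mul_div_cancel_right₀ _ (ne_of_gt hpos)
    have hmem : (x₀, y₀) ∈ bflyI ((k:ℝ)*2^(-j)) (((k:ℝ)+1)*2^(-j)) := by
      rw [mem_bflyI_char]
      left
      constructor
      · rw [hdx, Int.floor_intCast]
      · rw [hdy, Int.floor_intCast]
    have hmem0 : (x₀, y₀) ∈ bflyI ((k':ℝ)*2^l) (((k':ℝ)+1)*2^l) := by
      rw [← hEq]
      exact hmem
    exact bflyI_unique hmem hmem0
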